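/- Let R_1 and R_2 be R-cross-sections of IS_n and let φ: R_1 → R_2 be a semigroup isomorphism. Then there exists a permutation Θ of N_n such that for every block idempotent e of R_1 the partial maps eΘ and Θφ(e) coincide; that is, for every x ∈ N_n, x belongs to dom(e) if and only if xΘ belongs to dom(φ(e)), and in that case (xe)Θ = (xΘ)φ(e). -/

import Mathlib

open scoped Classical

/-- `IS n` is the full inverse symmetric semigroup: all partial bijections of `Fin n`;
multiplication is composition of partial maps (maps acting on the right). -/
abbrev IS (n : ℕ) : Type := PEquiv (Fin n) (Fin n)

noncomputable section
namespace ISW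

instance {n : ℕ} : Mul (IS n) := ⟨PEquiv.trans⟩
instance {n : ℕ} : One (IS n) := ⟨PEquiv.refl _⟩

/-- The domain of a partial bijection. -/
def pdom {n : ℕ} (f : IS n) : Set (Fin n) := {x | (f x).isSome}

/-- The range of a partial bijection. -/
def pran {n : ℕ} (f : IS n) : Set (Fin n) := {y | (f.symm y).isSome}

/-- Green's R-relation on a semigroup (with identity): `u R v` iff `uS = vS`. -/
def GreenR {S : Type*} [Mul S] (u v : S) : Prop :=
  {w | ∃ s, w = u * s} = {w | ∃ s, w = v * s}

/-- Green's L-relation on a semigroup (with identity): `u L v` iff `Su = Sv`. -/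
def GreenL {S : Type*} [Mul S] (u v : S) : Prop :=
  {w | ∃ s, w = s * u} = {w | ∃ s, w = s * v}

/-- An R-cross-section: a subsemigroup containing exactly one element of every
Green R-class. -/
def IsRCrossSection {S : Type*} [Mul S] (T : Set S) : Prop :=
  (∀ a ∈ T, ∀ b ∈ T, a * b ∈ T) ∧ ∀ x : S, ∃! t, t ∈ T ∧ GreenR x t

/-- An L-cross-section: a subsemigroup containing exactly one element of every
Green L-class. -/
def IsLCrossSection {S : Type*} [Mul S] (T : Set S) : Prop :=
  (∀ a ∈ T, ∀ b ∈ T, a * b ∈ T) ∧ ∀ x : S, ∃! t, t ∈ T ∧ GreenL x t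

/-- `φ` realizes a semigroup isomorphism from `T₁` onto `T₂`. -/
def IsSemiIso {S₁ S₂ : Type*} [Mul S₁] [Mul S₂] (T₁ : Set S₁) (T₂ : Set S₂)
    (φ : S₁ → S₂) : Prop :=
  Set.BijOn φ T₁ T₂ ∧ ∀ a ∈ T₁, ∀ b ∈ T₁, φ (a * b) = φ a * φ b

/-- The partial wreath product `IS m ≀_p IS n`: pairs `(f, a)` with `a ∈ IS n` and
`f` a partial map from `Fin n` to `IS m` whose domain equals the domain of `a`. -/
structure PW (m n : ℕ) where
  base : IS n
  fib : Fin n → Option (IS m)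
  dom_eq : ∀ x, (fib x).isSome ↔ (base x).isSome

/-- Multiplication of the partial wreath product: `(f,a)·(g,b) = (f g^a, ab)`. -/
instance {m n : ℕ} : Mul (PW m n) where
  mul u v :=
    { base := u.base * v.base
      fib := fun x => Option.map₂ (· * ·) (u.fib x) ((u.base x).bind v.fib)
      dom_eq := by
        intro x
        show _ ↔ (((u.base x).bind v.base)).isSome
        cases h : u.base x with
        | none =>
          have : u.fib x = none := by
            have := (u.dom_eq x)
            simp [h] at this
            simpa using Option.not_isSome_iff_eq_none.mp (by simp [this])
          simp [h, this, Option.map₂]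
        | some y =>
          have hf : (u.fib x).isSome := (u.dom_eq x).mpr (by simp [h])
          obtain ⟨s, hs⟩ := Option.isSome_iff_exists.mp hf
          cases h2 : v.base y with
          | none =>
            have : v.fib y = none := by
              have := (v.dom_eq y)
              simp [h2] at this
              simpa using Option.not_isSome_iff_eq_none.mp (by simp [this])
            simp [h, h2, hs, this, Option.map₂]
          | some z =>
            have hg : (v.fib y).isSome := (v.dom_eq y).mpr (by simp [h2])
            obtain ⟨t, ht⟩ := Option.isSome_iff_exists.mp hg
            simp [h, h2, hs, ht, Option.map₂] }

/-- The identity of the partial wreath product. -/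
instance {m n : ℕ} : One (PW m n) where
  one :=
    { base := 1
      fib := fun _ => some 1
      dom_eq := by intro x; simp; rfl }

/-- `chainFun L j x`: with `L` listing the elements of a block in increasing order and
`0 ≤ j < |L|` (`j` is the 0-based version of the paper's index), this is the value at `x` of
the chain `a_{i,j}`: the partial bijection with domain everything except `L[j]`,
sending `L[l] ↦ L[l+1]` for `l < j` and fixing all other points. -/
def chainFun {n : ℕ} (L : List (Fin n)) (j : ℕ) (x : Fin n) : Option (Fin n) :=
  if x ∈ L then
    if L.idxOf x = j then none
    else if L.idxOf x < j then L[L.idxOf x + 1]?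
    else some x
  else some x

/-- The generators `a_{i,j}` attached to an ordered decomposition with blocks `B i`. -/
def RGens {n s : ℕ} (B : Fin s → List (Fin n)) : Set (IS n) :=
  {a : IS n | ∃ i : Fin s, ∃ j : ℕ, j < (B i).length ∧ ∀ x, a x = chainFun (B i) j x}

/-- `R(M⃗₁, …, M⃗ₛ)`: the subsemigroup of `IS n` generated by the chains `a_{i,j}`
together with the identity map. -/
def RSec {n s : ℕ} (B : Fin s → List (Fin n)) : Set (IS n) :=
  (Subsemigroup.closure (RGens B ∪ {1}) : Subsemigroup (IS n))

/-- A decomposition of `Fin n` into disjoint nonempty blocks, each block equipped with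
a linear order, recorded by listing the elements of each block in increasing order. -/
structure OrderedPartition (n s : ℕ) where
  B : Fin s → List (Fin n)
  nonempty : ∀ i, B i ≠ []
  nodup : ∀ i, (B i).Nodup
  disjoint : ∀ i j, i ≠ j → ∀ x, x ∈ B i → x ∉ B j
  cover : ∀ x, ∃ i, x ∈ B i

/-- The chain `a_{i,j}` of the block listed by `L`, viewed inside `IS(M_i)`, i.e. embedded
into `IS n` as a partial bijection whose domain is contained in the block: it is defined on
`L` minus `L[j]`, sends `L[l] ↦ L[l+1]` for `l < j` and fixes the other points of `L`. -/
def chainFunB {n : ℕ} (L : List (Fin n)) (j : ℕ) (x : Fin n) : Option (Fin n) :=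
  if x ∈ L then
    if L.idxOf x = j then none
    else if L.idxOf x < j then L[L.idxOf x + 1]?
    else some x
  else none

/-- The generators of `R(M⃗)` inside `IS(M)` (embedded in `IS n`), `M` listed by `L`. -/
def BlockGens {n : ℕ} (L : List (Fin n)) : Set (IS n) :=
  {a : IS n | ∃ j : ℕ, j < L.length ∧ ∀ x, a x = chainFunB L j x}

/-- The identity of `IS(M)` (embedded in `IS n`): the identity map of the block listed by `L`. -/
def idOn {n : ℕ} (L : List (Fin n)) : Set (IS n) :=
  {a : IS n | ∀ x, a x = if x ∈ L then some x else none}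

/-- The R-cross-section `R(M⃗)` of `IS(M)`, embedded into `IS n`, for the block listed by `L`. -/
def RSecBlock {n : ℕ} (L : List (Fin n)) : Set (IS n) :=
  (Subsemigroup.closure (BlockGens L ∪ idOn L) : Subsemigroup (IS n))

/-- The wreath product `R_i ≀_p R(M⃗_i)` where `R(M⃗_i) ⊆ IS(M_i)`, `M_i` listed by `L`,
and `R_i = T ⊆ IS m`, realized inside `PW m n` via the natural embedding
`IS m ≀_p IS(M_i) ⊆ IS m ≀_p IS n`. -/
def WBlock (m n : ℕ) (L : List (Fin n)) (T : Set (IS m)) : Set (PW m n) :=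
  {u : PW m n | u.base ∈ RSecBlock L ∧ ∀ x f, u.fib x = some f → f ∈ T}

/-- The element `e' = (0̄, 1)` of `IS m ≀_p IS n`: the second component is the identity of
`IS n` and the first component sends every point to the empty map `0` of `IS m`. -/
def ezero (m n : ℕ) : PW m n where
  base := 1
  fib := fun _ => some ⊥
  dom_eq := by intro x; simp; rfl



section Lemmas
-- basic lemmas
variable {n : ℕ}

lemma mul_apply (a b : IS n) (x : Fin n) : (a * b) x = (a x).bind b := rfl

/-- partial identity -/
def pid (s : Set (Fin n)) : IS n := PEquiv.ofSet s

lemma pid_apply (s : Set (Fin n)) (x : Fin n) :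
    pid s x = if x ∈ s then some x else none := by
  rfl

lemma mem_pdom_pid (s : Set (Fin n)) (x : Fin n) : x ∈ pdom (pid s) ↔ x ∈ s := by
  simp only [pdom, Set.mem_setOf_eq, pid_apply]
  split_ifs <;> simp_all

lemma pid_mul_pid (s t : Set (Fin n)) : pid s * pid t = pid (s ∩ t) := by
  apply PEquiv.ext; intro x
  simp only [mul_apply, pid_apply]
  by_cases hs : x ∈ s <;> by_cases ht : x ∈ t <;> simp [hs, ht]

lemma pid_empty : pid (∅ : Set (Fin n)) = ⊥ := by
  apply PEquiv.ext; intro x; rw [pid_apply, if_neg (Set.notMem_empty x)]; rfl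

lemma pid_inj {s t : Set (Fin n)} (h : pid s = pid t) : s = t := by
  ext x
  have := congrArg (fun f : IS n => f x) h
  simp only [pid_apply] at this
  by_cases hs : x ∈ s <;> by_cases ht : x ∈ t <;> simp_all

lemma bot_apply (x : Fin n) : (⊥ : IS n) x = none := rfl

lemma mul_bot (a : IS n) : a * ⊥ = ⊥ := by
  apply PEquiv.ext; intro x
  rw [mul_apply]
  cases a x <;> rfl

lemma bot_mul (a : IS n) : ⊥ * a = ⊥ := by
  apply PEquiv.ext; intro x; rfl

lemma isSome_of_mul {a b : IS n} {x : Fin n} (h : ((a * b) x).isSome) : (a x).isSome := by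
  rw [mul_apply] at h
  cases h' : a x
  · rw [h'] at h; simp at h
  · simp

/-- idempotents are partial identities -/
lemma idem_fix {u : IS n} (hu : u * u = u) {x y : Fin n} (hx : u x = some y) : y = x := by
  have h1 : (u * u) x = some y := by rw [hu]; exact hx
  rw [mul_apply, hx] at h1
  -- h1 : u y = some y
  have h2 : u.symm y = some x := (PEquiv.eq_some_iff u).mpr hx
  have h3 : u.symm y = some y := (PEquiv.eq_some_iff u).mpr h1
  rw [h2] at h3; exact (Option.some_inj.mp h3).symm

lemma idem_eq_pid {u : IS n} (hu : u * u = u) : u = pid (pdom u) := by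
  apply PEquiv.ext; intro x
  rw [pid_apply]
  by_cases hx : x ∈ pdom u
  · obtain ⟨y, hy⟩ := Option.isSome_iff_exists.mp hx
    rw [if_pos hx, hy, idem_fix hu hy]
  · rw [if_neg hx]
    rw [pdom, Set.mem_setOf_eq, Option.isSome_iff_exists] at hx
    push_neg at hx
    exact Option.eq_none_iff_forall_not_mem.mpr (fun y hy => hx y hy)

lemma pdom_mul_subset_right_of_pid {s t : Set (Fin n)} (h : pid s * pid t = pid t) : t ⊆ s := by
  rw [pid_mul_pid] at h
  have := pid_inj h
  intro x hx; have : x ∈ s ∩ t := this.symm ▸ hx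
  exact this.1

/-- u = u * (u.symm.trans u) -/
lemma self_mem_greenR_set (u : IS n) : ∃ s, u = u * s := by
  refine ⟨u.symm.trans u, ?_⟩
  show u = u.trans (u.symm.trans u)
  rw [← PEquiv.trans_assoc, PEquiv.self_trans_symm]
  apply PEquiv.ext; intro x
  show u x = ((PEquiv.ofSet {a | (u a).isSome}) x).bind u
  show u x = (if x ∈ {a | (u a).isSome} then some x else none).bind u
  simp only [Set.mem_setOf_eq]
  by_cases hx : (u x).isSome
  · rw [if_pos hx]; rfl
  · rw [if_neg hx]
    cases h' : u x
    · rfl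
    · exact absurd (by rw [h']; rfl) hx

lemma greenR_pdom {u v : IS n} (h : GreenR u v) : pdom u = pdom v := by
  have h1 : u ∈ {w : IS n | ∃ s, w = v * s} := h ▸ self_mem_greenR_set u
  have h2 : v ∈ {w : IS n | ∃ s, w = u * s} := h.symm ▸ self_mem_greenR_set v
  obtain ⟨s1, hs1⟩ := h1
  obtain ⟨s2, hs2⟩ := h2
  ext x
  constructor
  · intro hx; exact isSome_of_mul (x := x) (hs1 ▸ hx)
  · intro hx; exact isSome_of_mul (x := x) (hs2 ▸ hx)


variable {n s : ℕ}


/-- The invariant satisfied by all elements of `RSec P.B`. -/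
def Psi (P : OrderedPartition n s) (a : IS n) : Prop :=
  ∀ i : Fin s, ∀ x ∈ P.B i, ∀ y : Fin n, a x = some y →
    y ∈ P.B i ∧ (P.B i).idxOf x ≤ (P.B i).idxOf y ∧
    ((P.B i).idxOf y = (P.B i).idxOf x →
      ∀ x' ∈ P.B i, (P.B i).idxOf x ≤ (P.B i).idxOf x' → (a x').isSome)

lemma psi_one (P : OrderedPartition n s) : Psi P (1 : IS n) := by
  intro i x hx y hy
  have : y = x := by
    have : (1 : IS n) x = some x := rfl
    rw [this] at hy; exact (Option.some_inj.mp hy).symm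
  subst this
  exact ⟨hx, le_refl _, fun _ x' _ _ => rfl⟩

lemma psi_mul (P : OrderedPartition n s) {a b : IS n} (ha : Psi P a) (hb : Psi P b) :
    Psi P (a * b) := by
  intro i x hx y hy
  rw [mul_apply] at hy
  obtain ⟨z, hz1, hz2⟩ := Option.bind_eq_some_iff.mp hy
  obtain ⟨hzB, hzle, hzeq⟩ := ha i x hx z hz1
  obtain ⟨hyB, hyle, hyeq⟩ := hb i z hzB y hz2
  refine ⟨hyB, le_trans hzle hyle, ?_⟩
  intro heq x' hx' hle
  have hzx : (P.B i).idxOf z = (P.B i).idxOf x := le_antisymm (heq ▸ hyle) hzle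
  have hyz : (P.B i).idxOf y = (P.B i).idxOf z := by omega
  have hax' := hzeq hzx x' hx' hle
  obtain ⟨z', hz'⟩ := Option.isSome_iff_exists.mp hax'
  obtain ⟨hz'B, hz'le, _⟩ := ha i x' hx' z' hz'
  have hbz' := hyeq hyz z' hz'B (by omega)
  rw [mul_apply, hz']
  exact hbz'

lemma psi_gen (P : OrderedPartition n s) {a : IS n} (ha : a ∈ RGens P.B) : Psi P a := by
  obtain ⟨i₀, j, hj, hfun⟩ := ha
  intro i x hx y hy
  by_cases hii : i = i₀
  · subst hii
    rw [hfun x, chainFun, if_pos hx] at hy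
    set L := P.B i with hL
    have hxl : L.idxOf x < L.length := List.idxOf_lt_length_iff.mpr hx
    by_cases h1 : L.idxOf x = j
    · rw [if_pos h1] at hy; exact absurd hy (by simp)
    · rw [if_neg h1] at hy
      by_cases h2 : L.idxOf x < j
      · rw [if_pos h2] at hy
        have hlen : L.idxOf x + 1 < L.length := by omega
        rw [List.getElem?_eq_getElem hlen] at hy
        have hy' : y = L[L.idxOf x + 1] := by simpa using hy.symm
        subst hy'
        have hidx : L.idxOf (L[L.idxOf x + 1]) = L.idxOf x + 1 :=
          List.Nodup.idxOf_getElem (P.nodup i) _ hlen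
        refine ⟨List.getElem_mem hlen, by omega, by omega⟩
      · rw [if_neg h2] at hy
        have hy' : y = x := by simpa using hy.symm
        subst hy'
        refine ⟨hx, le_refl _, ?_⟩
        intro _ x' hx' hle
        have hx'l : L.idxOf x' < L.length := List.idxOf_lt_length_iff.mpr hx'
        rw [hfun x', chainFun, if_pos hx', if_neg (by omega), if_neg (by omega)]
        rfl
  · have hxn : x ∉ P.B i₀ := P.disjoint i i₀ hii x hx
    rw [hfun x, chainFun, if_neg hxn] at hy
    have hy' : y = x := by simpa using hy.symm
    subst hy'
    refine ⟨hx, le_refl _, ?_⟩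
    intro _ x' hx' _
    have hx'n : x' ∉ P.B i₀ := P.disjoint i i₀ hii x' hx'
    rw [hfun x', chainFun, if_neg hx'n]
    rfl

/-- The subsemigroup of elements satisfying `Psi`. -/
def psiSub (P : OrderedPartition n s) : Subsemigroup (IS n) where
  carrier := {a | Psi P a}
  mul_mem' := fun ha hb => psi_mul P ha hb

lemma rsec_psi (P : OrderedPartition n s) {a : IS n} (ha : a ∈ RSec P.B) : Psi P a := by
  have : Subsemigroup.closure (RGens P.B ∪ {1}) ≤ psiSub P := by
    apply Subsemigroup.closure_le.mpr
    rintro a (ha | ha)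
    · exact psi_gen P ha
    · rw [Set.mem_singleton_iff] at ha; subst ha; exact psi_one P
  exact this ha


/-- The suffix of block `i` starting at (0-based) position `j`. -/
def SuffS (P : OrderedPartition n s) (i : Fin s) (j : ℕ) : Set (Fin n) :=
  {x | x ∈ P.B i ∧ j ≤ (P.B i).idxOf x}

lemma suffS_empty (P : OrderedPartition n s) (i : Fin s) {j : ℕ}
    (hj : (P.B i).length ≤ j) : SuffS P i j = ∅ := by
  ext x; simp only [SuffS, Set.mem_setOf_eq, Set.mem_empty_iff_false, iff_false, not_and, not_le]
  intro hx; exact lt_of_lt_of_le (List.idxOf_lt_length_iff.mpr hx) hj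

lemma suffS_anti (P : OrderedPartition n s) (i : Fin s) {j j' : ℕ} (h : j ≤ j') :
    SuffS P i j' ⊆ SuffS P i j := fun x hx => ⟨hx.1, le_trans h hx.2⟩

lemma suffS_inter_succ (P : OrderedPartition n s) (i : Fin s) {j j' : ℕ} (h : j ≤ j') :
    SuffS P i j ∩ SuffS P i j' = SuffS P i j' :=
  Set.inter_eq_self_of_subset_right (suffS_anti P i h)

lemma getElem_mem_suffS (P : OrderedPartition n s) (i : Fin s) {j : ℕ}
    (hj : j < (P.B i).length) : (P.B i)[j] ∈ SuffS P i j :=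
  ⟨List.getElem_mem hj, le_of_eq (List.Nodup.idxOf_getElem (P.nodup i) j hj).symm⟩

lemma getElem_not_mem_suffS_succ (P : OrderedPartition n s) (i : Fin s) {j : ℕ}
    (hj : j < (P.B i).length) : (P.B i)[j] ∉ SuffS P i (j + 1) := by
  intro hx
  have := hx.2
  rw [List.Nodup.idxOf_getElem (P.nodup i) j hj] at this
  omega

lemma suffS_disjoint (P : OrderedPartition n s) {i i' : Fin s} (h : i ≠ i') (j j' : ℕ) :
    SuffS P i j ∩ SuffS P i' j' = ∅ := by
  ext x
  simp only [Set.mem_inter_iff, Set.mem_empty_iff_false, iff_false, not_and]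
  intro hx hx'
  exact P.disjoint i i' h x hx.1 hx'.1

/-- Key pigeonhole lemma: the partial identity on a suffix of a block belongs
to the R-cross-section `RSec P.B`. -/
lemma pid_suffS_mem (P : OrderedPartition n s) (h₁ : IsRCrossSection (RSec P.B))
    (i : Fin s) (j : ℕ) : pid (SuffS P i j) ∈ RSec P.B := by
  obtain ⟨t, ⟨htR, htG⟩, -⟩ := h₁.2 (pid (SuffS P i j))
  have hdom : pdom t = SuffS P i j := by
    rw [← greenR_pdom htG]; ext x; exact mem_pdom_pid _ x
  have hpsi : Psi P t := rsec_psi P htR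
  -- t fixes every point of the suffix, by downward induction on the index
  have hfix : ∀ (m : ℕ) (x : Fin n), x ∈ SuffS P i j →
      (P.B i).length ≤ (P.B i).idxOf x + m → t x = some x := by
    intro m
    induction m with
    | zero =>
      intro x hx hlen
      exact absurd (List.idxOf_lt_length_iff.mpr hx.1) (by omega)
    | succ m ih =>
      intro x hx hlen
      have hxj : j ≤ (P.B i).idxOf x := hx.2
      have hxd : x ∈ pdom t := hdom ▸ hx
      obtain ⟨y, hy⟩ := Option.isSome_iff_exists.mp hxd
      obtain ⟨hyB, hyle, -⟩ := hpsi i x hx.1 y hy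
      by_cases hxy : (P.B i).idxOf y = (P.B i).idxOf x
      · have : y = x := (List.idxOf_inj hyB).mp (by omega)
        rw [hy, this]
      · have hylt : (P.B i).idxOf x < (P.B i).idxOf y := by omega
        have hty : t y = some y := ih y ⟨hyB, by omega⟩ (by omega)
        have hxeq : x = y := PEquiv.inj t (b := y) hy hty
        subst hxeq
        omega
  have : t = pid (SuffS P i j) := by
    apply PEquiv.ext; intro x
    rw [pid_apply]
    by_cases hx : x ∈ SuffS P i j
    · rw [if_pos hx]
      exact hfix (P.B i).length x hx (by omega)
    · rw [if_neg hx]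
      have : x ∉ pdom t := hdom ▸ hx
      cases h' : t x with
      | none => rfl
      | some y => exact absurd (by rw [pdom, Set.mem_setOf_eq, h']; rfl) this
  exact this ▸ htR


lemma pdom_bot : pdom (⊥ : IS n) = ∅ := by
  ext x
  simp only [pdom, Set.mem_setOf_eq, Set.mem_empty_iff_false, iff_false]
  show ¬(none : Option (Fin n)).isSome = true
  simp

lemma bot_of_pdom_empty {u : IS n} (h : pdom u = ∅) : u = ⊥ := by
  apply PEquiv.ext; intro x
  have hx : x ∉ pdom u := h ▸ Set.notMem_empty x
  cases h' : u x with
  | none => rfl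
  | some y => exact absurd (show x ∈ pdom u by rw [pdom, Set.mem_setOf_eq, h']; rfl) hx


end Lemmas

/-- for an isomorphism `φ` between R-cross-sections of `IS n` there is a
permutation `Θ` of `Fin n` such that `e Θ = Θ φ(e)` for every block idempotent `e` of the
first cross-section: `x ∈ dom e ↔ Θ x ∈ dom φ(e)`, and `(x e) Θ = (x Θ) φ(e)` there. -/
theorem iso_on_block_idempotents (n s : ℕ) (P : OrderedPartition n s) (T₂ : Set (IS n))
    (h₁ : IsRCrossSection (RSec P.B)) (h₂ : IsRCrossSection T₂)
    (φ : IS n → IS n) (hφ : IsSemiIso (RSec P.B) T₂ φ) :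
    ∃ Θ : Equiv.Perm (Fin n),
      ∀ e ∈ RSec P.B, e * e = e → (∃ i : Fin s, ∀ x, (e x).isSome → x ∈ P.B i) →
        ∀ x : Fin n,
          ((e x).isSome ↔ ((φ e) (Θ x)).isSome) ∧
          (∀ y, e x = some y → (φ e) (Θ x) = some (Θ y)) := by
  rcases Nat.eq_zero_or_pos n with hn | hn
  · exact ⟨Equiv.refl _, fun e _ _ _ x => absurd x.isLt (by omega)⟩
  have hmul : ∀ a ∈ RSec P.B, ∀ b ∈ RSec P.B, φ (a * b) = φ a * φ b := hφ.2
  have hmem : ∀ i j, pid (SuffS P i j) ∈ RSec P.B := fun i j => pid_suffS_mem P h₁ i j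
  obtain ⟨iw, hiw⟩ := P.cover ⟨0, hn⟩
  have hbotR : (⊥ : IS n) ∈ RSec P.B := by
    have := hmem iw (P.B iw).length
    rwa [suffS_empty P iw le_rfl, pid_empty] at this
  have hbotT : (⊥ : IS n) ∈ T₂ := by
    obtain ⟨t, ⟨htT, htG⟩, -⟩ := h₂.2 ⊥
    have hpd : pdom t = ∅ := by rw [← greenR_pdom htG]; exact pdom_bot
    rw [← bot_of_pdom_empty hpd]; exact htT
  have hφbot : φ ⊥ = ⊥ := by
    obtain ⟨a, haR, haφ⟩ := hφ.1.2.2 hbotT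
    have h := hmul ⊥ hbotR a haR
    rwa [bot_mul, haφ, mul_bot] at h
  -- the idempotents on the φ side
  have hE : ∀ i j, φ (pid (SuffS P i j)) * φ (pid (SuffS P i j)) = φ (pid (SuffS P i j)) := by
    intro i j
    rw [← hmul _ (hmem i j) _ (hmem i j), pid_mul_pid, Set.inter_self]
  have hEpid : ∀ i j, φ (pid (SuffS P i j)) = pid (pdom (φ (pid (SuffS P i j)))) :=
    fun i j => idem_eq_pid (hE i j)
  set D : Fin s → ℕ → Finset (Fin n) :=
    fun i j => Finset.univ.filter (fun x => (φ (pid (SuffS P i j)) x).isSome) with hD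
  have hDmem : ∀ i j x, x ∈ D i j ↔ (φ (pid (SuffS P i j)) x).isSome := by
    intro i j x; rw [hD]; simp
  have hDpdom : ∀ i j x, x ∈ D i j ↔ x ∈ pdom (φ (pid (SuffS P i j))) := fun i j x => hDmem i j x
  have hmono : ∀ (i : Fin s) {j j' : ℕ}, j ≤ j' → D i j' ⊆ D i j := by
    intro i j j' hjj
    have h1 : φ (pid (SuffS P i j)) * φ (pid (SuffS P i j')) = φ (pid (SuffS P i j')) := by
      rw [← hmul _ (hmem i j) _ (hmem i j'), pid_mul_pid, suffS_inter_succ P i hjj]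
    rw [hEpid i j, hEpid i j', pid_mul_pid] at h1
    have h2 := pid_inj h1
    intro x hx
    rw [hDpdom] at hx ⊢
    have : x ∈ pdom (φ (pid (SuffS P i j))) ∩ pdom (φ (pid (SuffS P i j'))) := h2.symm ▸ hx
    exact this.1
  have hstrict : ∀ (i : Fin s) (j : ℕ), j < (P.B i).length → D i (j + 1) ≠ D i j := by
    intro i j hj hne
    have hdomeq : pdom (φ (pid (SuffS P i (j+1)))) = pdom (φ (pid (SuffS P i j))) := by
      ext x
      rw [← hDpdom, ← hDpdom, hne]
    have hEeq : φ (pid (SuffS P i (j+1))) = φ (pid (SuffS P i j)) := by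
      rw [hEpid i (j+1), hEpid i j, hdomeq]
    have hpeq := hφ.1.2.1 (hmem i (j+1)) (hmem i j) hEeq
    have hseq := pid_inj hpeq
    exact getElem_not_mem_suffS_succ P i hj (hseq ▸ getElem_mem_suffS P i hj)
  have hDtop : ∀ i, D i (P.B i).length = ∅ := by
    intro i
    ext x
    rw [hDmem, suffS_empty P i le_rfl, pid_empty, hφbot]
    simp only [Finset.notMem_empty, iff_false]
    show ¬(none : Option (Fin n)).isSome = true
    simp
  have hdisj : ∀ i i', i ≠ i' → ∀ x, x ∈ D i 0 → x ∉ D i' 0 := by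
    intro i i' hii x hx hx'
    have h1 : φ (pid (SuffS P i 0)) * φ (pid (SuffS P i' 0)) = ⊥ := by
      rw [← hmul _ (hmem i 0) _ (hmem i' 0), pid_mul_pid, suffS_disjoint P hii 0 0,
        pid_empty, hφbot]
    rw [hEpid i 0, hEpid i' 0, pid_mul_pid, ← pid_empty] at h1
    have h2 := pid_inj h1
    rw [hDpdom] at hx hx'
    exact Set.notMem_empty x (h2 ▸ (Set.mem_inter hx hx'))
  -- counting
  have hlow : ∀ (i : Fin s) (m j : ℕ), j + m = (P.B i).length → m ≤ (D i j).card := by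
    intro i m
    induction m with
    | zero => intro j _; omega
    | succ m ih =>
      intro j hjm
      have hss : D i (j+1) ⊂ D i j :=
        HasSubset.Subset.ssubset_of_ne (hmono i (Nat.le_succ j)) (hstrict i j (by omega))
      have h1 := Finset.card_lt_card hss
      have h2 := ih (j+1) (by omega)
      omega
  have hsum_k : ∑ i : Fin s, (P.B i).length = n := by
    have huniv : (Finset.univ : Finset (Fin n)) =
        Finset.univ.biUnion (fun i : Fin s => (P.B i).toFinset) := by
      ext x
      simp only [Finset.mem_univ, Finset.mem_biUnion, List.mem_toFinset, true_iff]
      obtain ⟨i, hi⟩ := P.cover x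
      exact ⟨i, trivial, hi⟩
    have hcardu : (Finset.univ : Finset (Fin n)).card = n := by simp
    rw [huniv, Finset.card_biUnion] at hcardu
    · rw [show ∑ i : Fin s, (P.B i).length = ∑ i : Fin s, (P.B i).toFinset.card from
        Finset.sum_congr rfl fun i _ => (List.toFinset_card_of_nodup (P.nodup i)).symm]
      exact hcardu
    · intro i _ j _ hij
      rw [Function.onFun, Finset.disjoint_left]
      intro x hx
      simp only [List.mem_toFinset] at hx ⊢
      exact P.disjoint i j hij x hx
  have hsum_le : ∑ i : Fin s, (D i 0).card ≤ n := by
    have h1 : (Finset.univ.biUnion (fun i : Fin s => D i 0)).card = ∑ i : Fin s, (D i 0).card := by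
      apply Finset.card_biUnion
      intro i _ j _ hij
      rw [Function.onFun, Finset.disjoint_left]
      exact fun x hx => hdisj i j hij x hx
    calc ∑ i : Fin s, (D i 0).card = (Finset.univ.biUnion (fun i : Fin s => D i 0)).card := h1.symm
      _ ≤ (Finset.univ : Finset (Fin n)).card := Finset.card_le_card (Finset.subset_univ _)
      _ = n := by simp
  have hcard0 : ∀ i, (D i 0).card = (P.B i).length := by
    have hle : ∀ i : Fin s, (P.B i).length ≤ (D i 0).card :=
      fun i => hlow i (P.B i).length 0 (by omega)
    intro i
    by_contra hne
    have hlt : (P.B i).length < (D i 0).card := lt_of_le_of_ne (hle i) (fun h => hne h.symm)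
    have : ∑ i : Fin s, (P.B i).length < ∑ i : Fin s, (D i 0).card :=
      Finset.sum_lt_sum (fun i _ => hle i) ⟨i, Finset.mem_univ i, hlt⟩
    omega
  have hcard : ∀ (i : Fin s) (j : ℕ), j ≤ (P.B i).length → (D i j).card = (P.B i).length - j := by
    intro i j hj
    refine le_antisymm ?_ (hlow i ((P.B i).length - j) j (by omega))
    induction j with
    | zero => rw [hcard0]; omega
    | succ j ih =>
      have hss : D i (j+1) ⊂ D i j :=
        HasSubset.Subset.ssubset_of_ne (hmono i (Nat.le_succ j)) (hstrict i j (by omega))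
      have h1 := Finset.card_lt_card hss
      have h2 := ih (by omega)
      omega
  have hsdiff : ∀ (i : Fin s) (j : ℕ), j < (P.B i).length → (D i j \ D i (j+1)).card = 1 := by
    intro i j hj
    rw [Finset.card_sdiff_of_subset (hmono i (Nat.le_succ j)), hcard i j (le_of_lt hj),
      hcard i (j+1) (by omega)]
    omega
  -- construction of Θ
  choose iOf hiOf using P.cover
  have hiOf_unique : ∀ (x : Fin n) (i : Fin s), x ∈ P.B i → iOf x = i := by
    intro x i hxi
    by_contra hne
    exact P.disjoint (iOf x) i hne x (hiOf x) hxi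
  have hjx : ∀ x : Fin n, (P.B (iOf x)).idxOf x < (P.B (iOf x)).length :=
    fun x => List.idxOf_lt_length_iff.mpr (hiOf x)
  have hne1 : ∀ x : Fin n,
      (D (iOf x) ((P.B (iOf x)).idxOf x) \ D (iOf x) ((P.B (iOf x)).idxOf x + 1)).Nonempty := by
    intro x
    apply Finset.card_pos.mp
    rw [hsdiff (iOf x) _ (hjx x)]
    omega
  set θ : Fin n → Fin n := fun x =>
    (D (iOf x) ((P.B (iOf x)).idxOf x) \ D (iOf x) ((P.B (iOf x)).idxOf x + 1)).min' (hne1 x)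
    with hθ
  have hθmem : ∀ x : Fin n,
      θ x ∈ D (iOf x) ((P.B (iOf x)).idxOf x) \ D (iOf x) ((P.B (iOf x)).idxOf x + 1) :=
    fun x => Finset.min'_mem _ _
  have hkey0 : ∀ x : Fin n, θ x ∈ D (iOf x) 0 :=
    fun x => hmono (iOf x) (Nat.zero_le _) (Finset.mem_sdiff.mp (hθmem x)).1
  have hord : ∀ x y : Fin n, iOf x = iOf y →
      (P.B (iOf x)).idxOf x < (P.B (iOf y)).idxOf y → θ x ≠ θ y := by
    intro x y hixy hlt heq
    rw [hixy] at hlt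
    have h1 := (Finset.mem_sdiff.mp (hθmem x)).2
    have h2 : θ y ∈ D (iOf x) ((P.B (iOf x)).idxOf x + 1) := by
      rw [hixy]
      exact hmono (iOf y) (by omega) (Finset.mem_sdiff.mp (hθmem y)).1
    rw [heq] at h1
    exact h1 h2
  have hinj : Function.Injective θ := by
    intro x y hxy
    by_contra hne
    by_cases hixy : iOf x = iOf y
    · have hxB : x ∈ P.B (iOf y) := hixy ▸ hiOf x
      have hidx : (P.B (iOf x)).idxOf x ≠ (P.B (iOf y)).idxOf y := by
        intro h
        rw [hixy] at h
        exact hne ((List.idxOf_inj hxB).mp h)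
      rcases lt_or_gt_of_ne hidx with h | h
      · exact hord x y hixy h hxy
      · exact hord y x hixy.symm h hxy.symm
    · exact hdisj (iOf x) (iOf y) hixy (θ x) (hkey0 x) (hxy ▸ hkey0 y)
  refine ⟨Equiv.ofBijective θ (Finite.injective_iff_bijective.mp hinj), ?_⟩
  intro e heR hee hblk x
  obtain ⟨i₀, hi₀⟩ := hblk
  -- classification of the block idempotent e
  have hclass : ∃ j ≤ (P.B i₀).length, pdom e = SuffS P i₀ j := by
    by_cases hemp : pdom e = ∅
    · exact ⟨(P.B i₀).length, le_rfl, by rw [hemp, suffS_empty P i₀ le_rfl]⟩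
    · set Fe : Finset (Fin n) := Finset.univ.filter (fun z => (e z).isSome) with hFe
      have hFeNe : Fe.Nonempty := by
        obtain ⟨z, hz⟩ := Set.nonempty_iff_ne_empty.mpr hemp
        exact ⟨z, by rw [hFe]; simp only [Finset.mem_filter, Finset.mem_univ, true_and]; exact hz⟩
      set J := Fe.image (fun z => (P.B i₀).idxOf z) with hJ
      have hJNe : J.Nonempty := hFeNe.image _
      obtain ⟨x₀, hx₀F, hx₀j⟩ := Finset.mem_image.mp (J.min'_mem hJNe)
      have hx₀d : (e x₀).isSome := (Finset.mem_filter.mp hx₀F).2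
      have hx₀B : x₀ ∈ P.B i₀ := hi₀ x₀ hx₀d
      have hfix : e x₀ = some x₀ := by
        obtain ⟨y, hy⟩ := Option.isSome_iff_exists.mp hx₀d
        rw [hy, idem_fix hee hy]
      have hpsi := rsec_psi P heR i₀ x₀ hx₀B x₀ hfix
      refine ⟨J.min' hJNe, by rw [← hx₀j]; exact le_of_lt (List.idxOf_lt_length_iff.mpr hx₀B), ?_⟩
      ext z
      constructor
      · intro hz
        refine ⟨hi₀ z hz, ?_⟩
        apply Finset.min'_le
        rw [hJ]
        apply Finset.mem_image_of_mem
        rw [hFe]; simp only [Finset.mem_filter, Finset.mem_univ, true_and]; exact hz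
      · rintro ⟨hzB, hzj⟩
        exact hpsi.2.2 rfl z hzB (by omega)
  obtain ⟨j₀, hj₀le, hdome⟩ := hclass
  have hepid : e = pid (SuffS P i₀ j₀) := by rw [← hdome]; exact idem_eq_pid hee
  -- membership transfer along θ
  have hkey : ∀ z : Fin n, z ∈ SuffS P i₀ j₀ ↔ θ z ∈ D i₀ j₀ := by
    intro z
    constructor
    · rintro ⟨hzB, hzj⟩
      have hi : iOf z = i₀ := hiOf_unique z i₀ hzB
      have hm := (Finset.mem_sdiff.mp (hθmem z)).1
      rw [hi] at hm
      exact hmono i₀ hzj hm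
    · intro hz
      by_contra hns
      by_cases hzB : z ∈ P.B i₀
      · have hzj : (P.B i₀).idxOf z < j₀ := by
          rcases Nat.lt_or_ge ((P.B i₀).idxOf z) j₀ with h | h
          · exact h
          · exact absurd ⟨hzB, h⟩ hns
        have hi : iOf z = i₀ := hiOf_unique z i₀ hzB
        have hm := (Finset.mem_sdiff.mp (hθmem z)).2
        rw [hi] at hm
        exact hm (hmono i₀ (by omega) hz)
      · have hi : iOf z ≠ i₀ := fun h => hzB (h ▸ hiOf z)
        exact hdisj (iOf z) i₀ hi (θ z) (hkey0 z) (hmono i₀ (Nat.zero_le _) hz)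
  have hiff : (e x).isSome ↔ ((φ e) (θ x)).isSome := by
    have h1 : (e x).isSome ↔ x ∈ SuffS P i₀ j₀ := by
      rw [← hdome]; exact Iff.rfl
    have h2 : ((φ e) (θ x)).isSome ↔ θ x ∈ D i₀ j₀ := by
      rw [hepid, hDmem]
    rw [h1, h2]
    exact hkey x
  refine ⟨hiff, ?_⟩
  intro y hy
  have hyx : y = x := idem_fix hee hy
  subst hyx
  have hsx : (e y).isSome := by rw [hy]; rfl
  have hs : ((φ e) (θ y)).isSome := hiff.mp hsx
  have hidem2 : φ e * φ e = φ e := by rw [← hmul e heR e heR, hee]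
  obtain ⟨w, hw⟩ := Option.isSome_iff_exists.mp hs
  show (φ e) (θ y) = some (θ y)
  rw [hw, idem_fix hidem2 hw]

end ISW
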